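/- arXiv:1504.07298 — 2 statements merged into one kernel-verified Lean document; each statement's English description precedes it below -/
import Mathlib

section
/- If S[0] = L[0], then the Swap-Insert Correction distance satisfies δ(S, L) = δ(S.tail, L.tail). -/
open scoped BigOperators

variable {α : Type*} [DecidableEq α]

/-- One correction step: insertion of a symbol at an arbitrary position,
or swap of two adjacent symbols. -/
inductive SIStep : List α → List α → Prop
  | insert (u v : List α) (a : α) : SIStep (u ++ v) (u ++ a :: v)
  | swap (u v : List α) (a b : α) : SIStep (u ++ a :: b :: v) (u ++ b :: a :: v)

/-- There is a transformation from `S` to `L` using exactly `k` correction steps. -/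
def SIReach (S L : List α) (k : ℕ) : Prop :=
  ∃ f : ℕ → List α, f 0 = S ∧ f k = L ∧ ∀ i < k, SIStep (f i) (f (i + 1))

/-- The Swap-Insert Correction distance: the minimum number of insertions and
adjacent swaps transforming `S` into `L`, or `⊤` if no such sequence exists. -/
noncomputable def SIDist (S L : List α) : ℕ∞ :=
  sInf {n : ℕ∞ | ∃ k : ℕ, n = (k : ℕ∞) ∧ SIReach S L k}

lemma reach_refl (S : List α) : SIReach S S 0 :=
  ⟨fun _ => S, rfl, rfl, fun i hi => absurd hi (Nat.not_lt_zero i)⟩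

lemma reach_zero_eq {S L : List α} (h : SIReach S L 0) : S = L := by
  obtain ⟨f, h0, hk, _⟩ := h
  exact h0.symm.trans hk

lemma reach_one {S L : List α} (h : SIStep S L) : SIReach S L 1 := by
  refine ⟨fun i => if i = 0 then S else L, rfl, rfl, ?_⟩
  intro i hi
  interval_cases i
  simpa using h

lemma reach_succ {S L : List α} {k : ℕ} :
    SIReach S L (k + 1) ↔ ∃ M, SIStep S M ∧ SIReach M L k := by
  constructor
  · rintro ⟨f, h0, hk, hs⟩
    refine ⟨f 1, h0 ▸ hs 0 (Nat.succ_pos k), fun i => f (i + 1), rfl, hk, ?_⟩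
    intro i hi
    exact hs (i + 1) (by omega)
  · rintro ⟨M, hSM, f, h0, hk, hs⟩
    refine ⟨fun i => if i = 0 then S else f (i - 1), rfl, by simp [hk], ?_⟩
    intro i hi
    match i with
    | 0 => simpa [h0] using hSM
    | j + 1 =>
      simpa using hs j (by omega)

lemma reach_trans {S M L : List α} {j k : ℕ} (h1 : SIReach S M j) (h2 : SIReach M L k) :
    SIReach S L (j + k) := by
  induction j generalizing S with
  | zero => simpa [reach_zero_eq h1] using h2
  | succ j ih =>
    obtain ⟨N, hSN, hNM⟩ := reach_succ.mp h1
    have := ih hNM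
    rw [show j + 1 + k = (j + k) + 1 by omega]
    exact reach_succ.mpr ⟨N, hSN, this⟩

lemma step_cons (a : α) {S L : List α} (h : SIStep S L) : SIStep (a :: S) (a :: L) := by
  cases h with
  | insert u v b => exact SIStep.insert (a :: u) v b
  | swap u v b c => exact SIStep.swap (a :: u) v b c

lemma reach_cons (a : α) {S L : List α} {k : ℕ} (h : SIReach S L k) :
    SIReach (a :: S) (a :: L) k := by
  obtain ⟨f, h0, hk, hs⟩ := h
  exact ⟨fun i => a :: f i, by simp [h0], by simp [hk], fun i hi => step_cons a (hs i hi)⟩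

lemma step_erase (a : α) {S L : List α} (h : SIStep S L) :
    ∃ m ≤ 1, SIReach (S.erase a) (L.erase a) m := by
  cases h with
  | insert u v b =>
    by_cases hu : a ∈ u
    · rw [List.erase_append_left _ hu, List.erase_append_left _ hu]
      exact ⟨1, le_rfl, reach_one (SIStep.insert _ _ b)⟩
    · rw [List.erase_append_right _ hu, List.erase_append_right _ hu]
      by_cases hb : b = a
      · subst hb
        rw [List.erase_cons_head]
        by_cases hv : b ∈ v
        · obtain ⟨v₁, v₂, _, hveq, hverase⟩ := List.exists_erase_eq hv
          refine ⟨1, le_rfl, ?_⟩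
          rw [hverase]
          rw [hveq, ← List.append_assoc, ← List.append_assoc]
          exact reach_one (SIStep.insert (u ++ v₁) v₂ b)
        · rw [List.erase_of_not_mem hv]
          exact ⟨0, by norm_num, reach_refl _⟩
      · rw [List.erase_cons_tail (by simpa using hb)]
        exact ⟨1, le_rfl, reach_one (SIStep.insert u (v.erase a) b)⟩
  | swap u v b c =>
    by_cases hu : a ∈ u
    · rw [List.erase_append_left _ hu, List.erase_append_left _ hu]
      exact ⟨1, le_rfl, reach_one (SIStep.swap _ _ b c)⟩
    · rw [List.erase_append_right _ hu, List.erase_append_right _ hu]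
      by_cases hb : b = a <;> by_cases hc : c = a
      · subst hb; subst hc
        exact ⟨0, by norm_num, reach_refl _⟩
      · subst hb
        rw [List.erase_cons_head, List.erase_cons_tail (by simpa using hc),
          List.erase_cons_head]
        exact ⟨0, by norm_num, reach_refl _⟩
      · subst hc
        rw [List.erase_cons_tail (by simpa using hb), List.erase_cons_head,
          List.erase_cons_head]
        exact ⟨0, by norm_num, reach_refl _⟩
      · rw [List.erase_cons_tail (by simpa using hb), List.erase_cons_tail (by simpa using hc),
          List.erase_cons_tail (by simpa using hc), List.erase_cons_tail (by simpa using hb)]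
        exact ⟨1, le_rfl, reach_one (SIStep.swap u (v.erase a) b c)⟩

lemma reach_erase (a : α) {S L : List α} {k : ℕ} (h : SIReach S L k) :
    ∃ m ≤ k, SIReach (S.erase a) (L.erase a) m := by
  induction k generalizing S with
  | zero => exact ⟨0, le_rfl, (reach_zero_eq h) ▸ reach_refl _⟩
  | succ k ih =>
    obtain ⟨M, hSM, hML⟩ := reach_succ.mp h
    obtain ⟨m1, hm1, h1⟩ := step_erase a hSM
    obtain ⟨m2, hm2, h2⟩ := ih hML
    exact ⟨m1 + m2, by omega, reach_trans h1 h2⟩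

lemma dist_le_dist {S L S' L' : List α}
    (H : ∀ k, SIReach S' L' k → ∃ m ≤ k, SIReach S L m) :
    SIDist S L ≤ SIDist S' L' := by
  apply le_sInf
  rintro n ⟨k, rfl, hk⟩
  obtain ⟨m, hmk, hm⟩ := H k hk
  exact le_trans (sInf_le ⟨m, rfl, hm⟩) (by exact_mod_cast hmk)

/-- If the first symbols of `S` and `L` coincide, then
`δ(S, L) = δ(S.tail, L.tail)`. -/
theorem dist_cons_eq (S L : List α) (hS : S ≠ []) (hL : L ≠ [])
    (h : S.head hS = L.head hL) :
    SIDist S L = SIDist S.tail L.tail := by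
  set a := S.head hS with ha
  have hSeq : a :: S.tail = S := List.cons_head_tail hS
  have hLeq : a :: L.tail = L := by rw [h]; exact List.cons_head_tail hL
  apply le_antisymm
  · apply dist_le_dist
    intro k hk
    refine ⟨k, le_rfl, ?_⟩
    rw [← hSeq, ← hLeq]
    exact reach_cons a hk
  · apply dist_le_dist
    intro k hk
    have := reach_erase a hk
    rwa [← hSeq, ← hLeq, List.erase_cons_head, List.erase_cons_head] at this
end

section
/- If S[0] ≠ L[0] and δ(S, L) is finite, then δ(S, L) = min(d_ins, d_swaps), where d_ins = 1 + δ(S, L.tail), and d_swaps = (r − 1) + δ(S', L.tail) if the symbol L[0] occurs in S with first occurrence at position r (1-indexed) and S' is S with that occurrence removed, and d_swaps = ∞ if L[0] does not occur in S. -/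
open scoped BigOperators

variable {α : Type*} [DecidableEq α]

/-- Inductive reformulation of `SIReach`. -/
inductive SIR : List α → List α → ℕ → Prop
  | refl (L : List α) : SIR L L 0
  | head {S T L : List α} {k : ℕ} : SIStep S T → SIR T L k → SIR S L (k + 1)

lemma SIR.trans {S T L : List α} {m n : ℕ} (h1 : SIR S T m) (h2 : SIR T L n) :
    SIR S L (m + n) := by
  induction h1 with
  | refl => simpa using h2
  | head hs _ ih =>
      have := SIR.head hs (ih h2)
      convert this using 1
      omega

lemma SIR.single {S T : List α} (h : SIStep S T) : SIR S T 1 :=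
  SIR.head h (SIR.refl T)

lemma siReach_iff {S L : List α} {k : ℕ} : SIReach S L k ↔ SIR S L k := by
  constructor
  · intro h
    induction k generalizing S with
    | zero =>
        obtain ⟨f, h0, hk, _⟩ := h
        rw [← h0, hk]; exact SIR.refl L
    | succ k ih =>
        obtain ⟨f, h0, hk, hstep⟩ := h
        have h1 : SIReach (f 1) L k := ⟨fun i => f (i + 1), rfl, hk, fun i hi => hstep (i + 1) (by omega)⟩
        have := ih h1
        exact SIR.head (h0 ▸ hstep 0 (by omega)) this
  · intro h
    induction h with
    | refl L => exact ⟨fun _ => L, rfl, rfl, fun i hi => by omega⟩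
    | @head S T L k hs _ ih =>
        obtain ⟨f, h0, hk, hstep⟩ := ih
        refine ⟨fun i => if i = 0 then S else f (i - 1), rfl, by simp [hk], ?_⟩
        intro i hi
        match i with
        | 0 => simpa [h0] using hs
        | (j+1) =>
            simp only [Nat.succ_ne_zero, if_false, Nat.add_sub_cancel]
            exact hstep j (by omega)

lemma SIStep.cons {l l' : List α} (x : α) (h : SIStep l l') : SIStep (x :: l) (x :: l') := by
  cases h with
  | insert u v a => exact SIStep.insert (x :: u) v a
  | swap u v a b => exact SIStep.swap (x :: u) v a b

lemma SIR.cons {S L : List α} {k : ℕ} (x : α) (h : SIR S L k) : SIR (x :: S) (x :: L) k := by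
  induction h with
  | refl L => exact SIR.refl _
  | head hs _ ih => exact SIR.head (hs.cons x) ih

lemma SIR.append_left {S L : List α} {k : ℕ} (u : List α) (h : SIR S L k) :
    SIR (u ++ S) (u ++ L) k := by
  induction u with
  | nil => simpa
  | cons x u ih => exact ih.cons x

/-- Moving an element to the front costs `|w|` swaps. -/
lemma SIR.move (w v : List α) (a : α) : SIR (w ++ a :: v) (a :: (w ++ v)) w.length := by
  induction w with
  | nil => exact SIR.refl _
  | cons x w ih =>
      have h1 : SIR (x :: (w ++ a :: v)) (x :: a :: (w ++ v)) w.length := ih.cons x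
      have h2 : SIStep (x :: a :: (w ++ v)) (a :: x :: (w ++ v)) := SIStep.swap [] (w ++ v) x a
      have := h1.trans (SIR.single h2)
      simpa using this

lemma SIR.move' {t : List α} {j : ℕ} {a : α} (h : t[j]? = some a) :
    SIR t (a :: t.eraseIdx j) j := by
  have hj : j < t.length := by
    by_contra hc
    rw [List.getElem?_eq_none (le_of_not_gt hc)] at h
    exact absurd h (by simp)
  have hta : t[j] = a := by
    rw [List.getElem?_eq_getElem hj] at h; exact Option.some.inj h
  have hdec : t = t.take j ++ a :: t.drop (j + 1) := by
    conv_lhs => rw [← List.take_append_drop j t, List.drop_eq_getElem_cons hj, hta]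
  have hlen : (t.take j).length = j := by
    rw [List.length_take]; omega
  have hm := SIR.move (t.take j) (t.drop (j + 1)) a
  rw [hlen] at hm
  rw [List.eraseIdx_eq_take_drop_succ]
  nth_rewrite 1 [hdec]
  exact hm

lemma dist_le {S L : List α} {k : ℕ} (h : SIR S L k) : SIDist S L ≤ (k : ℕ∞) :=
  sInf_le ⟨k, rfl, siReach_iff.mpr h⟩

lemma dist_exists {S L : List α} (h : SIDist S L ≠ ⊤) :
    ∃ k : ℕ, SIDist S L = (k : ℕ∞) ∧ SIR S L k := by
  have hne : {n : ℕ∞ | ∃ k : ℕ, n = (k : ℕ∞) ∧ SIReach S L k}.Nonempty := by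
    by_contra hc
    rw [Set.not_nonempty_iff_eq_empty] at hc
    apply h
    rw [SIDist, hc, sInf_empty]
  have hmem := csInf_mem hne
  obtain ⟨k, hk, hr⟩ := hmem
  exact ⟨k, hk, siReach_iff.mp hr⟩

lemma indexOf_le_of_getElem? {S : List α} {i : ℕ} {a : α} (h : S[i]? = some a) :
    S.idxOf a ≤ i := by
  induction S generalizing i with
  | nil => simp at h
  | cons b S ih =>
      by_cases hba : b = a
      · subst hba; simp [List.idxOf_cons_self]
      · match i with
        | 0 => simp at h; exact absurd h hba
        | (j+1) =>
            simp only [List.getElem?_cons_succ] at h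
            have := ih h
            rw [List.idxOf_cons_ne _ (by exact hba)]
            omega

/-- Backward tracking of the head symbol of the target. -/
lemma backtrack {S L : List α} {k : ℕ} (h : SIR S L k) {a : α} {Y : List α}
    (hL : L = a :: Y) :
    (∃ k', k' + 1 ≤ k ∧ SIR S Y k') ∨
    (∃ i k', S[i]? = some a ∧ i + k' ≤ k ∧ SIR (S.eraseIdx i) Y k') := by
  induction h with
  | refl L =>
      subst hL
      exact Or.inr ⟨0, 0, by simp, le_refl 0, SIR.refl Y⟩
  | @head S T L k hs _ ih =>
      rcases ih hL with ⟨k', hk', hr⟩ | ⟨i, k', hget, hle, hr⟩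
      · exact Or.inl ⟨k' + 1, by omega, SIR.head hs hr⟩
      · cases hs with
        | insert u v b =>
            rcases lt_trichotomy i u.length with hi | hi | hi
            · -- token in u
              have hgS : (u ++ v)[i]? = some a := by
                rw [List.getElem?_append] at hget ⊢
                rwa [if_pos hi] at hget ⊢
              have e1 : (u ++ v).eraseIdx i = u.eraseIdx i ++ v :=
                List.eraseIdx_append_of_lt_length hi v
              have e2 : (u ++ b :: v).eraseIdx i = u.eraseIdx i ++ b :: v :=
                List.eraseIdx_append_of_lt_length hi _
              refine Or.inr ⟨i, k' + 1, hgS, by omega, ?_⟩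
              rw [e1]
              exact SIR.head (SIStep.insert (u.eraseIdx i) v b) (by rwa [e2] at hr)
            · -- the token is the inserted symbol
              refine Or.inl ⟨k', by omega, ?_⟩
              have e : (u ++ b :: v).eraseIdx i = u ++ v := by
                rw [List.eraseIdx_append_of_length_le (le_of_eq hi.symm)]
                simp [hi]
              rwa [e] at hr
            · -- token in v
              have hgS : (u ++ v)[i - 1]? = some a := by
                rw [List.getElem?_append_right (show u.length ≤ i - 1 by omega)]
                rw [List.getElem?_append_right (show u.length ≤ i by omega)] at hget
                rw [show i - u.length = (i - 1 - u.length) + 1 by omega] at hget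
                simpa using hget
              have e1 : (u ++ v).eraseIdx (i - 1) = u ++ v.eraseIdx (i - 1 - u.length) := by
                rw [List.eraseIdx_append_of_length_le (show u.length ≤ i - 1 by omega)]
              have e2 : (u ++ b :: v).eraseIdx i = u ++ b :: v.eraseIdx (i - 1 - u.length) := by
                rw [List.eraseIdx_append_of_length_le (show u.length ≤ i by omega)]
                rw [show i - u.length = (i - 1 - u.length) + 1 by omega]
                simp
              refine Or.inr ⟨i - 1, k' + 1, hgS, by omega, ?_⟩
              rw [e1]
              exact SIR.head (SIStep.insert u (v.eraseIdx (i - 1 - u.length)) b)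
                (by rwa [e2] at hr)
        | swap u v c d =>
            rcases lt_trichotomy i u.length with hi | hi | hi
            · -- token in u
              have hgS : (u ++ c :: d :: v)[i]? = some a := by
                rw [List.getElem?_append] at hget ⊢
                rwa [if_pos hi] at hget ⊢
              have e1 : (u ++ c :: d :: v).eraseIdx i = u.eraseIdx i ++ c :: d :: v :=
                List.eraseIdx_append_of_lt_length hi _
              have e2 : (u ++ d :: c :: v).eraseIdx i = u.eraseIdx i ++ d :: c :: v :=
                List.eraseIdx_append_of_lt_length hi _
              refine Or.inr ⟨i, k' + 1, hgS, by omega, ?_⟩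
              rw [e1]
              exact SIR.head (SIStep.swap (u.eraseIdx i) v c d) (by rwa [e2] at hr)
            · -- token is d (at position |u| of T)
              subst hi
              have hda : d = a := by
                rw [List.getElem?_append_right (le_refl _)] at hget
                simpa using hget
              have hgS : (u ++ c :: d :: v)[u.length + 1]? = some a := by
                rw [List.getElem?_append_right (show u.length ≤ u.length + 1 by omega)]
                rw [show u.length + 1 - u.length = 1 by omega]
                simpa using hda
              have e1 : (u ++ c :: d :: v).eraseIdx (u.length + 1) = u ++ c :: v := by
                rw [List.eraseIdx_append_of_length_le (show u.length ≤ u.length + 1 by omega)]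
                rw [show u.length + 1 - u.length = 1 by omega]
                simp
              have e2 : (u ++ d :: c :: v).eraseIdx u.length = u ++ c :: v := by
                rw [List.eraseIdx_append_of_length_le (le_refl _)]
                simp
              refine Or.inr ⟨u.length + 1, k', hgS, by omega, ?_⟩
              rw [e1]
              rwa [e2] at hr
            · rcases eq_or_lt_of_le (show u.length + 1 ≤ i by omega) with hi2 | hi2
              · -- token is c (at position |u|+1 of T)
                subst hi2
                have hca : c = a := by
                  rw [List.getElem?_append_right (show u.length ≤ u.length + 1 by omega)] at hget
                  rw [show u.length + 1 - u.length = 1 by omega] at hget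
                  simpa using hget
                have hgS : (u ++ c :: d :: v)[u.length]? = some a := by
                  rw [List.getElem?_append_right (le_refl _)]
                  simpa using hca
                have e1 : (u ++ c :: d :: v).eraseIdx u.length = u ++ d :: v := by
                  rw [List.eraseIdx_append_of_length_le (le_refl _)]
                  simp
                have e2 : (u ++ d :: c :: v).eraseIdx (u.length + 1) = u ++ d :: v := by
                  rw [List.eraseIdx_append_of_length_le (show u.length ≤ u.length + 1 by omega)]
                  rw [show u.length + 1 - u.length = 1 by omega]
                  simp
                refine Or.inr ⟨u.length, k', hgS, by omega, ?_⟩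
                rw [e1]
                rwa [e2] at hr
              · -- token in v
                have hgS : (u ++ c :: d :: v)[i]? = some a := by
                  rw [List.getElem?_append_right (show u.length ≤ i by omega)] at hget ⊢
                  rw [show i - u.length = (i - u.length - 2) + 1 + 1 by omega] at hget ⊢
                  simpa using hget
                have e1 : (u ++ c :: d :: v).eraseIdx i
                    = u ++ c :: d :: v.eraseIdx (i - u.length - 2) := by
                  rw [List.eraseIdx_append_of_length_le (show u.length ≤ i by omega)]
                  rw [show i - u.length = (i - u.length - 2) + 1 + 1 by omega]
                  simp
                have e2 : (u ++ d :: c :: v).eraseIdx i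
                    = u ++ d :: c :: v.eraseIdx (i - u.length - 2) := by
                  rw [List.eraseIdx_append_of_length_le (show u.length ≤ i by omega)]
                  rw [show i - u.length = (i - u.length - 2) + 1 + 1 by omega]
                  simp
                refine Or.inr ⟨i, k' + 1, hgS, by omega, ?_⟩
                rw [e1]
                exact SIR.head (SIStep.swap u (v.eraseIdx (i - u.length - 2)) c d)
                  (by rwa [e2] at hr)

/-- If `S[0] ≠ L[0]` and `δ(S, L)` is finite, then
`δ(S, L) = min d_ins d_swaps`, where `d_ins = 1 + δ(S, L.tail)` and
`d_swaps = (r - 1) + δ(S', L.tail)` when the symbol `L[0]` first occurs in `S`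
at (1-indexed) position `r` (so `r - 1 = indexOf`), `S'` being `S` with that
occurrence removed; `d_swaps = ∞` if `L[0]` does not occur in `S`. -/
theorem dist_branch (S L : List α) (hS : S ≠ []) (hL : L ≠ [])
    (hne : S.head hS ≠ L.head hL) (hfin : SIDist S L ≠ ⊤) :
    SIDist S L =
      min (1 + SIDist S L.tail)
        (if L.head hL ∈ S then
            (S.idxOf (L.head hL) : ℕ∞) + SIDist (S.erase (L.head hL)) L.tail
          else ⊤) := by
  set a := L.head hL with hadef
  have hLd : L = a :: L.tail := (List.cons_head_tail hL).symm
  apply le_antisymm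
  · apply le_min
    · -- δ(S,L) ≤ 1 + δ(S, tail L)
      rcases eq_or_ne (SIDist S L.tail) ⊤ with h | h
      · rw [h]; simp
      · obtain ⟨k, hk, hr⟩ := dist_exists h
        have hstep : SIStep L.tail L := by
          have := SIStep.insert ([] : List α) L.tail a
          simp only [List.nil_append] at this
          rwa [← hLd] at this
        have hfull : SIR S L (k + 1) := hr.trans (SIR.single hstep)
        calc SIDist S L ≤ ((k + 1 : ℕ) : ℕ∞) := dist_le hfull
          _ = 1 + SIDist S L.tail := by rw [hk]; push_cast; ring
    · by_cases hmem : a ∈ S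
      · rw [if_pos hmem]
        rcases eq_or_ne (SIDist (S.erase a) L.tail) ⊤ with h | h
        · rw [h]; simp
        · obtain ⟨k, hk, hr⟩ := dist_exists h
          have hrl : S.idxOf a < S.length := List.idxOf_lt_length_iff.mpr hmem
          have hget : S[S.idxOf a]? = some a := by
            rw [List.getElem?_eq_getElem hrl, List.getElem_idxOf]
          have h1 : SIR S (a :: S.erase a) (S.idxOf a) := by
            have := SIR.move' hget
            rwa [List.eraseIdx_idxOf_eq_erase] at this
          have h2 : SIR (a :: S.erase a) (a :: L.tail) k := hr.cons a
          have h3 : SIR S L (S.idxOf a + k) := by rw [hLd]; exact h1.trans h2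
          calc SIDist S L ≤ ((S.idxOf a + k : ℕ) : ℕ∞) := dist_le h3
            _ = (S.idxOf a : ℕ∞) + SIDist (S.erase a) L.tail := by rw [hk]; push_cast; ring
      · rw [if_neg hmem]; exact le_top
  · -- min ≤ δ(S,L)
    obtain ⟨k, hk, hr⟩ := dist_exists hfin
    rcases backtrack hr hLd with ⟨k', hk', hr'⟩ | ⟨i, k', hget, hle, hr'⟩
    · refine le_trans (min_le_left _ _) ?_
      have h1 : SIDist S L.tail ≤ (k' : ℕ∞) := dist_le hr'
      calc 1 + SIDist S L.tail ≤ 1 + (k' : ℕ∞) := add_le_add_right h1 1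
        _ = ((k' + 1 : ℕ) : ℕ∞) := by push_cast; ring
        _ ≤ (k : ℕ∞) := Nat.cast_le.mpr hk'
        _ = SIDist S L := hk.symm
    · have hil : i < S.length := by
        by_contra hc
        rw [List.getElem?_eq_none (le_of_not_gt hc)] at hget
        exact absurd hget (by simp)
      have hia : S[i] = a := by
        rw [List.getElem?_eq_getElem hil] at hget
        exact Option.some.inj hget
      have hmem : a ∈ S := hia ▸ List.getElem_mem hil
      refine le_trans (min_le_right _ _) ?_
      rw [if_pos hmem]
      have hri : S.idxOf a ≤ i := indexOf_le_of_getElem? hget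
      have hkey : SIDist (S.erase a) L.tail ≤ (((i - S.idxOf a) + k' : ℕ) : ℕ∞) := by
        rcases eq_or_lt_of_le hri with he | hlt
        · have heq : S.erase a = S.eraseIdx i := by
            rw [← List.eraseIdx_idxOf_eq_erase, he]
          rw [heq]
          exact le_trans (dist_le hr') (Nat.cast_le.mpr (by omega))
        · -- indexOf a < i
          have hrl : S.idxOf a < S.length := List.idxOf_lt_length_iff.mpr hmem
          have hgr : S[S.idxOf a]? = some a := by
            rw [List.getElem?_eq_getElem hrl, List.getElem_idxOf]
          have hdec : S = S.take (S.idxOf a) ++ a :: S.drop (S.idxOf a + 1) := by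
            conv_lhs => rw [← List.take_append_drop (S.idxOf a) S,
              List.drop_eq_getElem_cons hrl, List.getElem_idxOf hrl]
          have hlen : (S.take (S.idxOf a)).length = S.idxOf a := by
            rw [List.length_take]; omega
          have hgt : (S.drop (S.idxOf a + 1))[i - S.idxOf a - 1]? = some a := by
            rw [List.getElem?_drop, show S.idxOf a + 1 + (i - S.idxOf a - 1) = i by omega]
            exact hget
          have hm := (SIR.move' hgt).append_left (S.take (S.idxOf a))
          have eL : S.erase a = S.take (S.idxOf a) ++ S.drop (S.idxOf a + 1) := by
            rw [← List.eraseIdx_idxOf_eq_erase, List.eraseIdx_eq_take_drop_succ]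
          have eR : S.eraseIdx i = S.take (S.idxOf a)
              ++ a :: (S.drop (S.idxOf a + 1)).eraseIdx (i - S.idxOf a - 1) := by
            conv_lhs => rw [hdec]
            rw [List.eraseIdx_append_of_length_le (by rw [hlen]; omega), hlen,
              show i - S.idxOf a = (i - S.idxOf a - 1) + 1 by omega]
            simp
          rw [← eL, ← eR] at hm
          have hfull : SIR (S.erase a) L.tail ((i - S.idxOf a - 1) + k') := hm.trans hr'
          exact le_trans (dist_le hfull) (Nat.cast_le.mpr (by omega))
      calc (S.idxOf a : ℕ∞) + SIDist (S.erase a) L.tail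
          ≤ (S.idxOf a : ℕ∞) + (((i - S.idxOf a) + k' : ℕ) : ℕ∞) := add_le_add_right hkey _
        _ = ((S.idxOf a + ((i - S.idxOf a) + k') : ℕ) : ℕ∞) := by push_cast; ring
        _ ≤ (k : ℕ∞) := Nat.cast_le.mpr (by omega)
        _ = SIDist S L := hk.symm
end
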